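/- arXiv:1709.00625 — 3 statements merged into one kernel-verified Lean document; each statement's English description precedes it below -/
import Mathlib

section
/- In the bicameral game with parameters (m_s, m_r, q_s, q_r), where m_s < m_r and the quotas are simple majorities (q_s = ⌈(m_s+1)/2⌉ and q_r = ⌈(m_r+1)/2⌉), suppose one of the following holds: (i) m_s and m_r are both odd; (ii) m_s and m_r are both even; (iii) m_s is even and m_r is odd; (iv) m_s is odd, m_r is even, and m_r > 2·m_s. Then c_s(k) > c_r(k) for every k such that c_s(k) ≠ 0. Consequently, for every power index Φ that does not assign power 0 to both a senator and a representative, a senator has strictly greater Φ-power than a representative. -/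
/-- A coalition in the bicameral game with `ms` senators (the left summands) and `mr`
representatives (the right summands) is winning iff it contains at least `qs` senators
and at least `qr` representatives. -/
def bicamWinning (ms mr qs qr : ℕ) (S : Finset (Fin ms ⊕ Fin mr)) : Prop :=
  qs ≤ (S.filter (fun p => p.isLeft)).card ∧ qr ≤ (S.filter (fun p => p.isRight)).card

/-- The number of coalitions of size `k` in which player `i` is critical in the
bicameral game with parameters `(ms, mr, qs, qr)`. -/
noncomputable def bicamCrit (ms mr qs qr : ℕ) (i : Fin ms ⊕ Fin mr) (k : ℕ) : ℕ :=
  Set.ncard {S : Finset (Fin ms ⊕ Fin mr) |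
    S.card = k ∧ i ∈ S ∧ bicamWinning ms mr qs qr S ∧
      ¬ bicamWinning ms mr qs qr (S.erase i)}

open Finset Sum

section BicamAux
variable {ms mr : ℕ}

lemma bicam_filterLeft_card (S : Finset (Fin ms ⊕ Fin mr)) :
    (S.filter (fun p => p.isLeft)).card = S.toLeft.card := by
  rw [show S.filter (fun p => p.isLeft) = S.toLeft.map ⟨Sum.inl, Sum.inl_injective⟩ by
    ext x; cases x <;> simp, card_map]

lemma bicam_filterRight_card (S : Finset (Fin ms ⊕ Fin mr)) :
    (S.filter (fun p => p.isRight)).card = S.toRight.card := by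
  rw [show S.filter (fun p => p.isRight) = S.toRight.map ⟨Sum.inr, Sum.inr_injective⟩ by
    ext x; cases x <;> simp, card_map]

lemma bicamWinning_iff (qs qr : ℕ) (S : Finset (Fin ms ⊕ Fin mr)) :
    bicamWinning ms mr qs qr S ↔ qs ≤ S.toLeft.card ∧ qr ≤ S.toRight.card := by
  unfold bicamWinning
  rw [bicam_filterLeft_card, bicam_filterRight_card]

lemma bicam_toLeft_erase_inl (S : Finset (Fin ms ⊕ Fin mr)) (s : Fin ms) :
    (S.erase (Sum.inl s)).toLeft = S.toLeft.erase s := by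
  ext x; simp [Finset.mem_erase]

lemma bicam_toRight_erase_inl (S : Finset (Fin ms ⊕ Fin mr)) (s : Fin ms) :
    (S.erase (Sum.inl s)).toRight = S.toRight := by
  ext x; simp [Finset.mem_erase]

lemma bicam_toLeft_erase_inr (S : Finset (Fin ms ⊕ Fin mr)) (r : Fin mr) :
    (S.erase (Sum.inr r)).toLeft = S.toLeft := by
  ext x; simp [Finset.mem_erase]

lemma bicam_toRight_erase_inr (S : Finset (Fin ms ⊕ Fin mr)) (r : Fin mr) :
    (S.erase (Sum.inr r)).toRight = S.toRight.erase r := by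
  ext x; simp [Finset.mem_erase]

lemma bicam_ncard_left (q n : ℕ) (hq : 1 ≤ q) (s : Fin ms) :
    Set.ncard {S : Finset (Fin ms ⊕ Fin mr) |
        Sum.inl s ∈ S ∧ S.toLeft.card = q ∧ S.toRight.card = n}
      = (ms - 1).choose (q - 1) * mr.choose n := by
  classical
  have himg : {S : Finset (Fin ms ⊕ Fin mr) |
        Sum.inl s ∈ S ∧ S.toLeft.card = q ∧ S.toRight.card = n}
      = ↑(((((univ : Finset (Fin ms)).erase s).powersetCard (q-1)) ×ˢ
            ((univ : Finset (Fin mr)).powersetCard n)).image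
          (fun p => (insert s p.1).disjSum p.2)) := by
    ext S
    simp only [Set.mem_setOf_eq, coe_image, Set.mem_image, mem_coe, mem_product,
      mem_powersetCard]
    constructor
    · rintro ⟨hs, hl, hr⟩
      have hsL : s ∈ S.toLeft := by simpa using hs
      refine ⟨(S.toLeft.erase s, S.toRight), ⟨⟨?_, ?_⟩, subset_univ _, hr⟩, ?_⟩
      · exact erase_subset_erase _ (subset_univ _)
      · rw [card_erase_of_mem hsL, hl]
      · simp only
        rw [insert_erase hsL, toLeft_disjSum_toRight]
    · rintro ⟨⟨A, B⟩, ⟨⟨hA, hAc⟩, _, hBc⟩, rfl⟩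
      have hsA : s ∉ A := fun h => (mem_erase.mp (hA h)).1 rfl
      refine ⟨by simp, ?_, by simp [hBc]⟩
      rw [toLeft_disjSum, card_insert_of_notMem hsA, hAc]
      omega
  rw [himg, Set.ncard_coe_finset]
  rw [card_image_of_injOn, card_product, card_powersetCard, card_powersetCard,
    card_erase_of_mem (mem_univ s), card_univ, card_univ, Fintype.card_fin, Fintype.card_fin]
  rintro ⟨A₁, B₁⟩ h₁ ⟨A₂, B₂⟩ h₂ h
  simp only [disjSum_inj] at h
  simp only [mem_coe, mem_product, mem_powersetCard] at h₁ h₂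
  have hs₁ : s ∉ A₁ := fun hh => (mem_erase.mp (h₁.1.1 hh)).1 rfl
  have hs₂ : s ∉ A₂ := fun hh => (mem_erase.mp (h₂.1.1 hh)).1 rfl
  have hA : A₁ = A₂ := by
    have := congrArg (fun T => Finset.erase T s) h.1
    simpa [erase_insert hs₁, erase_insert hs₂] using this
  exact Prod.ext hA h.2

lemma bicam_ncard_right (q n : ℕ) (hq : 1 ≤ q) (r : Fin mr) :
    Set.ncard {S : Finset (Fin ms ⊕ Fin mr) |
        Sum.inr r ∈ S ∧ S.toLeft.card = n ∧ S.toRight.card = q}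
      = (mr - 1).choose (q - 1) * ms.choose n := by
  classical
  have himg : {S : Finset (Fin ms ⊕ Fin mr) |
        Sum.inr r ∈ S ∧ S.toLeft.card = n ∧ S.toRight.card = q}
      = ↑((((univ : Finset (Fin ms)).powersetCard n) ×ˢ
            (((univ : Finset (Fin mr)).erase r).powersetCard (q-1))).image
          (fun p => p.1.disjSum (insert r p.2))) := by
    ext S
    simp only [Set.mem_setOf_eq, coe_image, Set.mem_image, mem_coe, mem_product,
      mem_powersetCard]
    constructor
    · rintro ⟨hs, hl, hr⟩
      have hsR : r ∈ S.toRight := by simpa using hs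
      refine ⟨(S.toLeft, S.toRight.erase r), ⟨⟨subset_univ _, hl⟩, ?_, ?_⟩, ?_⟩
      · exact erase_subset_erase _ (subset_univ _)
      · rw [card_erase_of_mem hsR, hr]
      · simp only
        rw [insert_erase hsR, toLeft_disjSum_toRight]
    · rintro ⟨⟨A, B⟩, ⟨⟨_, hAc⟩, hB, hBc⟩, rfl⟩
      have hrB : r ∉ B := fun h => (mem_erase.mp (hB h)).1 rfl
      refine ⟨by simp, by simp [hAc], ?_⟩
      rw [toRight_disjSum, card_insert_of_notMem hrB, hBc]
      omega
  rw [himg, Set.ncard_coe_finset]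
  rw [card_image_of_injOn, card_product, card_powersetCard, card_powersetCard,
    card_erase_of_mem (mem_univ r), card_univ, card_univ, Fintype.card_fin, Fintype.card_fin]
  · ring
  rintro ⟨A₁, B₁⟩ h₁ ⟨A₂, B₂⟩ h₂ h
  simp only [disjSum_inj] at h
  simp only [mem_coe, mem_product, mem_powersetCard] at h₁ h₂
  have hr₁ : r ∉ B₁ := fun hh => (mem_erase.mp (h₁.2.1 hh)).1 rfl
  have hr₂ : r ∉ B₂ := fun hh => (mem_erase.mp (h₂.2.1 hh)).1 rfl
  have hB : B₁ = B₂ := by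
    have := congrArg (fun T => Finset.erase T r) h.2
    simpa [erase_insert hr₁, erase_insert hr₂] using this
  exact Prod.ext h.1 hB

lemma bicam_crit_inl (qs qr k : ℕ) (hqs1 : 1 ≤ qs) (s : Fin ms) :
    bicamCrit ms mr qs qr (Sum.inl s) k =
      if qs + qr ≤ k then (ms - 1).choose (qs - 1) * mr.choose (k - qs) else 0 := by
  unfold bicamCrit
  split_ifs with h
  · rw [← bicam_ncard_left (mr := mr) qs (k - qs) hqs1 s]
    congr 1
    ext S
    simp only [Set.mem_setOf_eq, bicamWinning_iff, bicam_toLeft_erase_inl,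
      bicam_toRight_erase_inl]
    constructor
    · rintro ⟨hcard, hmem, ⟨h1, h2⟩, h3⟩
      have hsL : s ∈ S.toLeft := by simpa using hmem
      have hcards : S.toLeft.card + S.toRight.card = k := by
        rw [card_toLeft_add_card_toRight, hcard]
      have hce : (S.toLeft.erase s).card = S.toLeft.card - 1 := card_erase_of_mem hsL
      have hcp : 0 < S.toLeft.card := card_pos.mpr ⟨s, hsL⟩
      have hL : S.toLeft.card = qs := by
        rcases not_and_or.mp h3 with h' | h'
        · omega
        · exact absurd h2 h'
      exact ⟨hmem, hL, by omega⟩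
    · rintro ⟨hmem, hL, hR⟩
      have hsL : s ∈ S.toLeft := by simpa using hmem
      have hcards : S.toLeft.card + S.toRight.card = S.card :=
        card_toLeft_add_card_toRight
      refine ⟨by omega, hmem, ⟨by omega, by omega⟩, ?_⟩
      rw [not_and_or]
      left
      rw [card_erase_of_mem hsL]
      omega
  · convert Set.ncard_empty (Finset (Fin ms ⊕ Fin mr))
    ext S
    simp only [Set.mem_setOf_eq, bicamWinning_iff, Set.mem_empty_iff_false, iff_false,
      not_and, not_not]
    rintro hcard hmem ⟨h1, h2⟩
    have hcards : S.toLeft.card + S.toRight.card = k := by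
      rw [card_toLeft_add_card_toRight, hcard]
    omega

lemma bicam_crit_inr (qs qr k : ℕ) (hqr1 : 1 ≤ qr) (r : Fin mr) :
    bicamCrit ms mr qs qr (Sum.inr r) k =
      if qs + qr ≤ k then (mr - 1).choose (qr - 1) * ms.choose (k - qr) else 0 := by
  unfold bicamCrit
  split_ifs with h
  · rw [← bicam_ncard_right (ms := ms) qr (k - qr) hqr1 r]
    congr 1
    ext S
    simp only [Set.mem_setOf_eq, bicamWinning_iff, bicam_toLeft_erase_inr,
      bicam_toRight_erase_inr]
    constructor
    · rintro ⟨hcard, hmem, ⟨h1, h2⟩, h3⟩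
      have hsR : r ∈ S.toRight := by simpa using hmem
      have hcards : S.toLeft.card + S.toRight.card = k := by
        rw [card_toLeft_add_card_toRight, hcard]
      have hce : (S.toRight.erase r).card = S.toRight.card - 1 := card_erase_of_mem hsR
      have hcp : 0 < S.toRight.card := card_pos.mpr ⟨r, hsR⟩
      have hR : S.toRight.card = qr := by
        rcases not_and_or.mp h3 with h' | h'
        · exact absurd h1 h'
        · omega
      exact ⟨hmem, by omega, hR⟩
    · rintro ⟨hmem, hL, hR⟩
      have hsR : r ∈ S.toRight := by simpa using hmem
      have hcards : S.toLeft.card + S.toRight.card = S.card :=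
        card_toLeft_add_card_toRight
      refine ⟨by omega, hmem, ⟨by omega, by omega⟩, ?_⟩
      rw [not_and_or]
      right
      rw [card_erase_of_mem hsR]
      omega
  · convert Set.ncard_empty (Finset (Fin ms ⊕ Fin mr))
    ext S
    simp only [Set.mem_setOf_eq, bicamWinning_iff, Set.mem_empty_iff_false, iff_false,
      not_and, not_not]
    rintro hcard hmem ⟨h1, h2⟩
    have hcards : S.toLeft.card + S.toRight.card = k := by
      rw [card_toLeft_add_card_toRight, hcard]
    omega

end BicamAux

lemma bicam_key_base (ms mr qs qr : ℕ) (hms : 1 ≤ ms) (hsize : ms < mr)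
    (hqs : qs = ms / 2 + 1) (hqr : qr = mr / 2 + 1)
    (hcase : (Odd ms ∧ Odd mr) ∨ (Even ms ∧ Even mr) ∨ (Even ms ∧ Odd mr) ∨
      (Odd ms ∧ Even mr ∧ mr > 2 * ms)) :
    ms * qr < mr * qs := by
  rcases hcase with ⟨⟨a, ha⟩, ⟨b, hb⟩⟩ | ⟨⟨a, ha⟩, ⟨b, hb⟩⟩ | ⟨⟨a, ha⟩, ⟨b, hb⟩⟩ |
    ⟨⟨a, ha⟩, ⟨b, hb⟩, hbig⟩ <;> subst ha hb <;>
    (have h1 : qs = a + 1 := by omega) <;> (have h2 : qr = b + 1 := by omega) <;>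
    subst h1 h2 <;> nlinarith

lemma bicam_key_step (ms mr qs qr j : ℕ) (hms : 1 ≤ ms) (hsize : ms < mr)
    (hqs : qs = ms / 2 + 1) (hqr : qr = mr / 2 + 1)
    (hcase : (Odd ms ∧ Odd mr) ∨ (Even ms ∧ Even mr) ∨ (Even ms ∧ Odd mr) ∨
      (Odd ms ∧ Even mr ∧ mr > 2 * ms))
    (hs : qs + j + 1 ≤ ms) (hr : qr + j + 1 ≤ mr) :
    (ms - (qs + j)) * (qr + j + 1) ≤ (mr - (qr + j)) * (qs + j + 1) := by
  zify [show qs + j ≤ ms by omega, show qr + j ≤ mr by omega]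
  have hj : (0 : ℤ) ≤ (j : ℤ) := Int.natCast_nonneg j
  rcases hcase with ⟨⟨a, ha⟩, ⟨b, hb⟩⟩ | ⟨⟨a, ha⟩, ⟨b, hb⟩⟩ | ⟨⟨a, ha⟩, ⟨b, hb⟩⟩ |
    ⟨⟨a, ha⟩, ⟨b, hb⟩, hbig⟩ <;> subst ha hb <;>
    (have h1 : qs = a + 1 := by omega) <;> (have h2 : qr = b + 1 := by omega) <;>
    subst h1 h2 <;> push_cast <;>
    nlinarith [mul_le_mul_of_nonneg_left (show (a : ℤ) ≤ b by omega) hj]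

lemma bicam_key_ineq (ms mr qs qr : ℕ) (hms : 1 ≤ ms) (hsize : ms < mr)
    (hqs : qs = ms / 2 + 1) (hqr : qr = mr / 2 + 1)
    (hcase : (Odd ms ∧ Odd mr) ∨ (Even ms ∧ Even mr) ∨ (Even ms ∧ Odd mr) ∨
      (Odd ms ∧ Even mr ∧ mr > 2 * ms)) :
    ∀ j : ℕ, qr + j ≤ mr →
      (mr - 1).choose (qr - 1) * ms.choose (qs + j) <
      (ms - 1).choose (qs - 1) * mr.choose (qr + j) := by
  have hA : 0 < (ms - 1).choose (qs - 1) := Nat.choose_pos (by omega)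
  have hB : 0 < (mr - 1).choose (qr - 1) := Nat.choose_pos (by omega)
  intro j
  induction j with
  | zero =>
    intro _
    simp only [Nat.add_zero]
    have e1 : ms.choose qs * qs = (ms - 1).choose (qs - 1) * ms := by
      have h := Nat.add_one_mul_choose_eq (ms - 1) (qs - 1)
      rw [show ms - 1 + 1 = ms by omega,
        show qs - 1 + 1 = qs by omega] at h
      rw [← h, Nat.mul_comm]
    have e2 : mr.choose qr * qr = (mr - 1).choose (qr - 1) * mr := by
      have h := Nat.add_one_mul_choose_eq (mr - 1) (qr - 1)
      rw [show mr - 1 + 1 = mr by omega,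
        show qr - 1 + 1 = qr by omega] at h
      rw [← h, Nat.mul_comm]
    have hq : ms * qr < mr * qs := bicam_key_base ms mr qs qr hms hsize hqs hqr hcase
    refine lt_of_mul_lt_mul_right ?_ (Nat.zero_le (qs * qr))
    calc (mr - 1).choose (qr - 1) * ms.choose qs * (qs * qr)
        = ((mr - 1).choose (qr - 1) * (ms.choose qs * qs)) * qr := by ring
      _ = ((mr - 1).choose (qr - 1) * ((ms - 1).choose (qs - 1) * ms)) * qr := by rw [e1]
      _ = ((ms - 1).choose (qs - 1) * (mr - 1).choose (qr - 1)) * (ms * qr) := by ring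
      _ < ((ms - 1).choose (qs - 1) * (mr - 1).choose (qr - 1)) * (mr * qs) :=
          mul_lt_mul_of_pos_left hq (Nat.mul_pos hA hB)
      _ = ((ms - 1).choose (qs - 1) * ((mr - 1).choose (qr - 1) * mr)) * qs := by ring
      _ = ((ms - 1).choose (qs - 1) * (mr.choose qr * qr)) * qs := by rw [e2]
      _ = (ms - 1).choose (qs - 1) * mr.choose qr * (qs * qr) := by ring
  | succ j ih =>
    intro hr
    have ihh := ih (by omega)
    have goal_eq1 : qr + (j + 1) = qr + j + 1 := rfl
    have goal_eq2 : qs + (j + 1) = qs + j + 1 := rfl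
    rw [goal_eq1, goal_eq2]
    by_cases hms2 : ms < qs + j + 1
    · rw [Nat.choose_eq_zero_of_lt hms2, Nat.mul_zero]
      exact Nat.mul_pos hA (Nat.choose_pos (by omega))
    · push_neg at hms2
      have e2 : mr.choose (qr + j + 1) * (qr + j + 1) = mr.choose (qr + j) * (mr - (qr + j)) :=
        Nat.choose_succ_right_eq mr (qr + j)
      have e3 : ms.choose (qs + j + 1) * (qs + j + 1) = ms.choose (qs + j) * (ms - (qs + j)) :=
        Nat.choose_succ_right_eq ms (qs + j)
      have hK := bicam_key_step ms mr qs qr j hms hsize hqs hqr hcase hms2 hr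
      have hpos : 0 < (mr - (qr + j)) * (qs + j + 1) := by
        apply Nat.mul_pos <;> omega
      refine lt_of_mul_lt_mul_right ?_ (Nat.zero_le ((qs + j + 1) * (qr + j + 1)))
      calc (mr - 1).choose (qr - 1) * ms.choose (qs + j + 1) * ((qs + j + 1) * (qr + j + 1))
          = ((mr - 1).choose (qr - 1) * (ms.choose (qs + j + 1) * (qs + j + 1))) *
              (qr + j + 1) := by ring
        _ = ((mr - 1).choose (qr - 1) * (ms.choose (qs + j) * (ms - (qs + j)))) *
              (qr + j + 1) := by rw [e3]
        _ = ((mr - 1).choose (qr - 1) * ms.choose (qs + j)) *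
              ((ms - (qs + j)) * (qr + j + 1)) := by ring
        _ ≤ ((mr - 1).choose (qr - 1) * ms.choose (qs + j)) *
              ((mr - (qr + j)) * (qs + j + 1)) := Nat.mul_le_mul_left _ hK
        _ < ((ms - 1).choose (qs - 1) * mr.choose (qr + j)) *
              ((mr - (qr + j)) * (qs + j + 1)) := mul_lt_mul_of_pos_right ihh hpos
        _ = ((ms - 1).choose (qs - 1) * (mr.choose (qr + j) * (mr - (qr + j)))) *
              (qs + j + 1) := by ring
        _ = ((ms - 1).choose (qs - 1) * (mr.choose (qr + j + 1) * (qr + j + 1))) *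
              (qs + j + 1) := by rw [e2]
        _ = (ms - 1).choose (qs - 1) * mr.choose (qr + j + 1) *
              ((qs + j + 1) * (qr + j + 1)) := by ring

/-- Theorem 1 of the paper: with simple-majority quotas and `ms < mr`, in each of the four
listed parity cases a senator's critical numbers strictly dominate a representative's,
and consequently every power index not assigning zero power to both ranks the senator
strictly above the representative. -/
theorem bicam_senator_ranked_above_representative (ms mr qs qr : ℕ)
    (hsize : ms < mr) (hqs : qs = ms / 2 + 1) (hqr : qr = mr / 2 + 1)
    (hcase : (Odd ms ∧ Odd mr) ∨ (Even ms ∧ Even mr) ∨ (Even ms ∧ Odd mr) ∨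
      (Odd ms ∧ Even mr ∧ mr > 2 * ms))
    (s : Fin ms) (r : Fin mr) :
    (∀ k : ℕ, bicamCrit ms mr qs qr (Sum.inl s) k ≠ 0 →
      bicamCrit ms mr qs qr (Sum.inl s) k > bicamCrit ms mr qs qr (Sum.inr r) k) ∧
    (∀ lam : ℕ → ℝ,
      (∀ t ∈ Finset.Icc 1 (ms + mr), 0 ≤ lam t) →
      (∑ t ∈ Finset.Icc 1 (ms + mr), lam t * ((ms + mr - 1).choose (t - 1) : ℝ)) = 1 →
      ¬((∑ t ∈ Finset.Icc 1 (ms + mr),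
            lam t * (bicamCrit ms mr qs qr (Sum.inl s) t : ℝ)) = 0 ∧
        (∑ t ∈ Finset.Icc 1 (ms + mr),
            lam t * (bicamCrit ms mr qs qr (Sum.inr r) t : ℝ)) = 0) →
      (∑ t ∈ Finset.Icc 1 (ms + mr), lam t * (bicamCrit ms mr qs qr (Sum.inl s) t : ℝ)) >
      (∑ t ∈ Finset.Icc 1 (ms + mr), lam t * (bicamCrit ms mr qs qr (Sum.inr r) t : ℝ))) := by
  have hms1 : 1 ≤ ms := s.pos
  have hqs1 : 1 ≤ qs := by omega
  have hqr1 : 1 ≤ qr := by omega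
  have hcs := fun k => bicam_crit_inl (mr := mr) qs qr k hqs1 s
  have hcr := fun k => bicam_crit_inr (ms := ms) qs qr k hqr1 r
  have part1 : ∀ k : ℕ, bicamCrit ms mr qs qr (Sum.inl s) k ≠ 0 →
      bicamCrit ms mr qs qr (Sum.inl s) k > bicamCrit ms mr qs qr (Sum.inr r) k := by
    intro k hk
    rw [hcs k] at hk ⊢
    rw [hcr k]
    by_cases hle : qs + qr ≤ k
    · rw [if_pos hle] at hk ⊢
      rw [if_pos hle]
      have hch : mr.choose (k - qs) ≠ 0 := by
        intro h0; rw [h0, Nat.mul_zero] at hk; exact hk rfl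
      have hbound : k - qs ≤ mr := by
        by_contra hgt
        push_neg at hgt
        exact hch (Nat.choose_eq_zero_of_lt hgt)
      rw [show k - qs = qr + (k - qs - qr) by omega, show k - qr = qs + (k - qs - qr) by omega]
      exact bicam_key_ineq ms mr qs qr hms1 hsize hqs hqr hcase (k - qs - qr) (by omega)
    · rw [if_neg hle] at hk
      exact absurd rfl hk
  have hge : ∀ k : ℕ, bicamCrit ms mr qs qr (Sum.inr r) k ≤
      bicamCrit ms mr qs qr (Sum.inl s) k := by
    intro k
    by_cases h0 : bicamCrit ms mr qs qr (Sum.inl s) k = 0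
    · rw [h0, Nat.le_zero]
      rw [hcs k] at h0
      rw [hcr k]
      by_cases hle : qs + qr ≤ k
      · rw [if_pos hle] at h0
        rw [if_pos hle]
        have hA : 0 < (ms - 1).choose (qs - 1) := Nat.choose_pos (by omega)
        have hch : mr.choose (k - qs) = 0 := by
          rcases Nat.mul_eq_zero.mp h0 with h' | h'
          · omega
          · exact h'
        have h1 : mr < k - qs := Nat.choose_eq_zero_iff.mp hch
        rw [Nat.mul_eq_zero]
        right
        exact Nat.choose_eq_zero_of_lt (by omega)
      · rw [if_neg hle]
    · exact le_of_lt (part1 k h0)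
  refine ⟨part1, ?_⟩
  intro lam hpos hnorm hne
  have hterm : ∀ t ∈ Finset.Icc 1 (ms + mr),
      lam t * (bicamCrit ms mr qs qr (Sum.inr r) t : ℝ) ≤
      lam t * (bicamCrit ms mr qs qr (Sum.inl s) t : ℝ) := fun t ht =>
    mul_le_mul_of_nonneg_left (Nat.cast_le.mpr (hge t)) (hpos t ht)
  have hle : (∑ t ∈ Finset.Icc 1 (ms + mr),
        lam t * (bicamCrit ms mr qs qr (Sum.inr r) t : ℝ)) ≤
      (∑ t ∈ Finset.Icc 1 (ms + mr),
        lam t * (bicamCrit ms mr qs qr (Sum.inl s) t : ℝ)) := Finset.sum_le_sum hterm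
  rcases lt_or_eq_of_le hle with h | h
  · exact h
  · exfalso
    apply hne
    have heq := (Finset.sum_eq_sum_iff_of_le hterm).mp h
    have hz : ∀ t ∈ Finset.Icc 1 (ms + mr),
        lam t * (bicamCrit ms mr qs qr (Sum.inl s) t : ℝ) = 0 ∧
        lam t * (bicamCrit ms mr qs qr (Sum.inr r) t : ℝ) = 0 := by
      intro t ht
      have h1 := heq t ht
      by_cases hl : lam t = 0
      · simp [hl]
      · have h2 : ((bicamCrit ms mr qs qr (Sum.inr r) t : ℝ)) =
            (bicamCrit ms mr qs qr (Sum.inl s) t : ℝ) := mul_left_cancel₀ hl h1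
        have h3 : bicamCrit ms mr qs qr (Sum.inr r) t =
            bicamCrit ms mr qs qr (Sum.inl s) t := Nat.cast_injective h2
        by_cases hz0 : bicamCrit ms mr qs qr (Sum.inl s) t = 0
        · have hz1 : bicamCrit ms mr qs qr (Sum.inr r) t = 0 := by omega
          simp [hz0, hz1]
        · exact absurd h3 (ne_of_lt (part1 t hz0))
    constructor
    · exact Finset.sum_eq_zero fun t ht => (hz t ht).1
    · exact Finset.sum_eq_zero fun t ht => (hz t ht).2
end

section
/- Let x ≥ 1 and consider the bicameral game with m_s = 2x + 1, m_r = 2x + 2 (so m_r = m_s + 1) and simple-majority quotas q_s = x + 1, q_r = x + 2. Then: (a) c_s(k) ≠ 0 if and only if 2x + 3 ≤ k ≤ 3x + 3, and c_r(k) ≠ 0 if and only if c_s(k) ≠ 0; (b) c_s(k) < c_r(k) for every k such that c_s(k) ≠ 0. Hence in this game the representative is strictly weakly more desirable than the senator: c_r(k) > c_s(k) for all k such that c_r(k) and c_s(k) are not both zero. -/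
open Finset Sum

section Helpers

variable {α β : Type*} [DecidableEq α] [DecidableEq β]

lemma filter_isLeft_card (S : Finset (α ⊕ β)) :
    (S.filter (fun p => p.isLeft)).card = S.toLeft.card := by
  rw [show S.filter (fun p => p.isLeft) = S.toLeft.map ⟨inl, inl_injective⟩ by
    ext p; cases p <;> simp]
  simp

lemma filter_isRight_card (S : Finset (α ⊕ β)) :
    (S.filter (fun p => p.isRight)).card = S.toRight.card := by
  rw [show S.filter (fun p => p.isRight) = S.toRight.map ⟨inr, inr_injective⟩ by
    ext p; cases p <;> simp]
  simp

lemma toLeft_erase_inl (S : Finset (α ⊕ β)) (a : α) :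
    (S.erase (inl a)).toLeft = S.toLeft.erase a := by
  ext y; simp [mem_erase]

lemma toRight_erase_inl (S : Finset (α ⊕ β)) (a : α) :
    (S.erase (inl a)).toRight = S.toRight := by
  ext y; simp [mem_erase]

lemma toLeft_erase_inr (S : Finset (α ⊕ β)) (b : β) :
    (S.erase (inr b)).toLeft = S.toLeft := by
  ext y; simp [mem_erase]

lemma toRight_erase_inr (S : Finset (α ⊕ β)) (b : β) :
    (S.erase (inr b)).toRight = S.toRight.erase b := by
  ext y; simp [mem_erase]

lemma count_prod [Fintype α] [Fintype β] (P : Finset α → Prop) (Q : Finset β → Prop)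
    [DecidablePred P] [DecidablePred Q] :
    Set.ncard {S : Finset (α ⊕ β) | P S.toLeft ∧ Q S.toRight} =
      (univ.filter P).card * (univ.filter Q).card := by
  have h : {S : Finset (α ⊕ β) | P S.toLeft ∧ Q S.toRight} =
      ↑(univ.filter (fun S : Finset (α ⊕ β) => P S.toLeft ∧ Q S.toRight)) := by
    ext S; simp
  rw [h, Set.ncard_coe_finset, ← card_product]
  refine card_nbij' (fun S => (S.toLeft, S.toRight)) (fun p => p.1.disjSum p.2) ?_ ?_ ?_ ?_
  · intro S hS; simp only [mem_coe, mem_filter, mem_univ, true_and] at hS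
    simp [mem_product, hS.1, hS.2]
  · intro p hp; simp only [mem_coe, mem_product, mem_filter, mem_univ, true_and] at hp
    simp [hp.1, hp.2]
  · intro S _; exact toLeft_disjSum_toRight
  · intro p _; simp

lemma count_card [Fintype α] (n : ℕ) :
    (univ.filter (fun A : Finset α => A.card = n)).card = (Fintype.card α).choose n := by
  rw [show univ.filter (fun A : Finset α => A.card = n) = powersetCard n univ by
    ext A; simp [mem_powersetCard]]
  rw [card_powersetCard, card_univ]

lemma count_card_mem [Fintype α] (a : α) (n : ℕ) :
    (univ.filter (fun A : Finset α => A.card = n + 1 ∧ a ∈ A)).card =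
      (Fintype.card α - 1).choose n := by
  rw [← card_univ, ← card_erase_of_mem (mem_univ a), ← card_powersetCard]
  refine card_nbij' (fun A => A.erase a) (fun B => insert a B) ?_ ?_ ?_ ?_
  · intro A hA; simp only [mem_coe, mem_filter, mem_univ, true_and] at hA
    simp only [mem_coe, mem_powersetCard]
    exact ⟨fun y hy => mem_erase.mpr ⟨(mem_erase.mp hy).1, mem_univ y⟩,
      by rw [card_erase_of_mem hA.2, hA.1]; rfl⟩
  · intro B hB; simp only [mem_coe, mem_powersetCard] at hB
    have ha : a ∉ B := fun h => (mem_erase.mp (hB.1 h)).1 rfl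
    simp [card_insert_of_notMem ha, hB.2]
  · intro A hA; simp only [mem_coe, mem_filter, mem_univ, true_and] at hA
    exact insert_erase hA.2
  · intro B hB; simp only [mem_coe, mem_powersetCard] at hB
    exact erase_insert (fun h => (mem_erase.mp (hB.1 h)).1 rfl)

lemma count_range (m q a k : ℕ) :
    (univ.filter (fun B : Finset (Fin m) => q ≤ B.card ∧ B.card + a = k)).card
      = if q + a ≤ k then m.choose (k - a) else 0 := by
  split_ifs with h
  · rw [show univ.filter (fun B : Finset (Fin m) => q ≤ B.card ∧ B.card + a = k)
        = univ.filter (fun B : Finset (Fin m) => B.card = k - a) from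
      filter_congr (by intro B _; constructor <;> (intro hh; omega))]
    rw [count_card]; simp
  · rw [filter_false_of_mem, card_empty]
    rintro B _ ⟨h1, h2⟩; omega

end Helpers

lemma crit_inl (x k : ℕ) (s : Fin (2*x+1)) :
    {S : Finset (Fin (2*x+1) ⊕ Fin (2*x+2)) |
      S.card = k ∧ Sum.inl s ∈ S ∧ bicamWinning (2*x+1) (2*x+2) (x+1) (x+2) S ∧
        ¬ bicamWinning (2*x+1) (2*x+2) (x+1) (x+2) (S.erase (Sum.inl s))} =
    {S | (S.toLeft.card = x+1 ∧ s ∈ S.toLeft) ∧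
         (x+2 ≤ S.toRight.card ∧ S.toRight.card + (x+1) = k)} := by
  ext S
  simp only [Set.mem_setOf_eq, bicamWinning, filter_isLeft_card, filter_isRight_card,
    toLeft_erase_inl, toRight_erase_inl]
  have hk := S.card_toLeft_add_card_toRight
  constructor
  · rintro ⟨hcard, hmem, ⟨hL, hR⟩, hnot⟩
    have hsL : s ∈ S.toLeft := mem_toLeft.mpr hmem
    have he : (S.toLeft.erase s).card = S.toLeft.card - 1 := card_erase_of_mem hsL
    have h2 : (S.toLeft.erase s).card < x + 1 := by
      by_contra hc
      exact hnot ⟨le_of_not_gt hc, hR⟩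
    exact ⟨⟨by omega, hsL⟩, hR, by omega⟩
  · rintro ⟨⟨hL, hsL⟩, hR, hk2⟩
    have hmem : Sum.inl s ∈ S := mem_toLeft.mp hsL
    have he : (S.toLeft.erase s).card = S.toLeft.card - 1 := card_erase_of_mem hsL
    exact ⟨by omega, hmem, ⟨by omega, hR⟩, fun ⟨h1, _⟩ => by omega⟩

lemma crit_inr (x k : ℕ) (r : Fin (2*x+2)) :
    {S : Finset (Fin (2*x+1) ⊕ Fin (2*x+2)) |
      S.card = k ∧ Sum.inr r ∈ S ∧ bicamWinning (2*x+1) (2*x+2) (x+1) (x+2) S ∧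
        ¬ bicamWinning (2*x+1) (2*x+2) (x+1) (x+2) (S.erase (Sum.inr r))} =
    {S | (x+1 ≤ S.toLeft.card ∧ S.toLeft.card + (x+2) = k) ∧
         (S.toRight.card = x+2 ∧ r ∈ S.toRight)} := by
  ext S
  simp only [Set.mem_setOf_eq, bicamWinning, filter_isLeft_card, filter_isRight_card,
    toLeft_erase_inr, toRight_erase_inr]
  have hk := S.card_toLeft_add_card_toRight
  constructor
  · rintro ⟨hcard, hmem, ⟨hL, hR⟩, hnot⟩
    have hsR : r ∈ S.toRight := mem_toRight.mpr hmem
    have he : (S.toRight.erase r).card = S.toRight.card - 1 := card_erase_of_mem hsR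
    have h2 : (S.toRight.erase r).card < x + 2 := by
      by_contra hc
      exact hnot ⟨hL, le_of_not_gt hc⟩
    exact ⟨⟨hL, by omega⟩, by omega, hsR⟩
  · rintro ⟨⟨hL, hk2⟩, hR, hsR⟩
    have hmem : Sum.inr r ∈ S := mem_toRight.mp hsR
    have he : (S.toRight.erase r).card = S.toRight.card - 1 := card_erase_of_mem hsR
    exact ⟨by omega, hmem, ⟨hL, by omega⟩, fun ⟨_, h2⟩ => by omega⟩

lemma cs_val (x k : ℕ) (s : Fin (2*x+1)) :
    bicamCrit (2*x+1) (2*x+2) (x+1) (x+2) (Sum.inl s) k =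
      (2*x).choose x * (if 2*x+3 ≤ k then (2*x+2).choose (k - (x+1)) else 0) := by
  classical
  rw [bicamCrit, crit_inl,
    count_prod (fun A : Finset (Fin (2*x+1)) => A.card = x+1 ∧ s ∈ A)
      (fun B : Finset (Fin (2*x+2)) => x+2 ≤ B.card ∧ B.card + (x+1) = k),
    count_card_mem, count_range]
  congr 1
  · simp
  · congr 1; simp; constructor <;> (intro; omega)

lemma cr_val (x k : ℕ) (r : Fin (2*x+2)) :
    bicamCrit (2*x+1) (2*x+2) (x+1) (x+2) (Sum.inr r) k =
      (if 2*x+3 ≤ k then (2*x+1).choose (k - (x+2)) else 0) * (2*x+1).choose (x+1) := by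
  classical
  rw [bicamCrit, crit_inr,
    count_prod (fun A : Finset (Fin (2*x+1)) => x+1 ≤ A.card ∧ A.card + (x+2) = k)
      (fun B : Finset (Fin (2*x+2)) => B.card = x+2 ∧ r ∈ B),
    count_card_mem, count_range]
  congr 1
  · congr 1; simp; constructor <;> (intro; omega)
  · simp

/-- The extreme exceptional case `mr = ms + 1`: with `ms = 2x + 1`, `mr = 2x + 2`,
`qs = x + 1`, `qr = x + 2`: (a) the senator's critical numbers are nonzero exactly
for `2x + 3 ≤ k ≤ 3x + 3`, and the representative's support coincides with the
senator's; (b) the representative's critical number strictly exceeds the senator's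
there; hence the representative strictly dominates the senator. -/
theorem bicam_adjacent_size_case (x : ℕ) (hx : 1 ≤ x)
    (s : Fin (2 * x + 1)) (r : Fin (2 * x + 2)) :
    (∀ k : ℕ, bicamCrit (2 * x + 1) (2 * x + 2) (x + 1) (x + 2) (Sum.inl s) k ≠ 0 ↔
      2 * x + 3 ≤ k ∧ k ≤ 3 * x + 3) ∧
    (∀ k : ℕ, bicamCrit (2 * x + 1) (2 * x + 2) (x + 1) (x + 2) (Sum.inr r) k ≠ 0 ↔
      bicamCrit (2 * x + 1) (2 * x + 2) (x + 1) (x + 2) (Sum.inl s) k ≠ 0) ∧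
    (∀ k : ℕ, bicamCrit (2 * x + 1) (2 * x + 2) (x + 1) (x + 2) (Sum.inl s) k ≠ 0 →
      bicamCrit (2 * x + 1) (2 * x + 2) (x + 1) (x + 2) (Sum.inl s) k <
      bicamCrit (2 * x + 1) (2 * x + 2) (x + 1) (x + 2) (Sum.inr r) k) ∧
    (∀ k : ℕ, ¬(bicamCrit (2 * x + 1) (2 * x + 2) (x + 1) (x + 2) (Sum.inr r) k = 0 ∧
               bicamCrit (2 * x + 1) (2 * x + 2) (x + 1) (x + 2) (Sum.inl s) k = 0) →
      bicamCrit (2 * x + 1) (2 * x + 2) (x + 1) (x + 2) (Sum.inr r) k >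
      bicamCrit (2 * x + 1) (2 * x + 2) (x + 1) (x + 2) (Sum.inl s) k) := by
  have ha : ∀ k, bicamCrit (2*x+1) (2*x+2) (x+1) (x+2) (Sum.inl s) k ≠ 0 ↔
      2*x+3 ≤ k ∧ k ≤ 3*x+3 := by
    intro k
    rw [cs_val]
    split_ifs with h
    · rw [Ne, Nat.mul_eq_zero, not_or]
      simp only [Nat.choose_eq_zero_iff, not_lt]
      omega
    · simp; omega
  have hb : ∀ k, bicamCrit (2*x+1) (2*x+2) (x+1) (x+2) (Sum.inr r) k ≠ 0 ↔
      2*x+3 ≤ k ∧ k ≤ 3*x+3 := by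
    intro k
    rw [cr_val]
    split_ifs with h
    · rw [Ne, Nat.mul_eq_zero, not_or]
      simp only [Nat.choose_eq_zero_iff, not_lt]
      omega
    · simp; omega
  have hlt : ∀ k, bicamCrit (2*x+1) (2*x+2) (x+1) (x+2) (Sum.inl s) k ≠ 0 →
      bicamCrit (2*x+1) (2*x+2) (x+1) (x+2) (Sum.inl s) k <
      bicamCrit (2*x+1) (2*x+2) (x+1) (x+2) (Sum.inr r) k := by
    intro k hk
    obtain ⟨hk1, hk2⟩ := (ha k).mp hk
    rw [cs_val, cr_val, if_pos hk1, if_pos hk1]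
    set j := k - (x+2) with hj
    have hrw : k - (x+1) = j + 1 := by omega
    rw [hrw]
    have hjl : x + 1 ≤ j := by omega
    have hjr : j ≤ 2*x + 1 := by omega
    set a := (2*x).choose x with haa
    set b := (2*x+2).choose (j+1) with hbb
    set c := (2*x+1).choose (x+1) with hcc
    set d := (2*x+1).choose j with hdd
    have h1 : (2*x+1) * a = c * (x+1) := by
      have := Nat.add_one_mul_choose_eq (2*x) x
      simpa [Nat.succ_eq_add_one] using this
    have h2 : (2*x+2) * d = b * (j+1) := by
      have := Nat.add_one_mul_choose_eq (2*x+1) j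
      simpa [Nat.succ_eq_add_one, Nat.add_assoc] using this
    have hpa : 0 < a := Nat.choose_pos (by omega)
    have hpb : 0 < b := Nat.choose_pos (by omega)
    have base : (x+1)*(2*x+2) < (2*x+1)*(j+1) := by nlinarith
    have key : ((x+1)*(2*x+2)) * (a*b) < ((x+1)*(2*x+2)) * (d*c) := by
      have e : ((x+1)*(2*x+2)) * (d*c) = ((2*x+1)*(j+1)) * (a*b) := by
        calc ((x+1)*(2*x+2)) * (d*c) = (c*(x+1)) * ((2*x+2)*d) := by ring
        _ = ((2*x+1)*a) * (b*(j+1)) := by rw [← h1, h2]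
        _ = ((2*x+1)*(j+1)) * (a*b) := by ring
      rw [e]
      exact Nat.mul_lt_mul_of_lt_of_le base (le_refl (a*b)) (Nat.mul_pos hpa hpb)
    exact Nat.lt_of_mul_lt_mul_left key
  refine ⟨ha, fun k => (hb k).trans (ha k).symm, hlt, fun k h => ?_⟩
  have hcs : bicamCrit (2*x+1) (2*x+2) (x+1) (x+2) (Sum.inl s) k ≠ 0 := by
    intro h0
    exact h ⟨by rw [← not_ne_iff, hb k, ← ha k, not_ne_iff]; exact h0, h0⟩
  exact hlt k hcs
end

section
/- In the US legislative game: if c_s(k) = 0 then c_v(k) = 0; if c_s(k) ≠ 0 then 270 ≤ k ≤ 503, and moreover (i) for every k with 270 ≤ k ≤ 356, c_s(k) = c_v(k), and (ii) for every k with 357 ≤ k ≤ 503, c_s(k) > c_v(k). -/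
/-- The players of the US legislative game: the president, the vice president,
100 senators, and 435 representatives. -/
inductive USPlayer where
  | pres : USPlayer
  | vp : USPlayer
  | sen : Fin 100 → USPlayer
  | rep : Fin 435 → USPlayer
  deriving DecidableEq

/-- Whether a player is a senator. -/
def USPlayer.isSen : USPlayer → Bool
  | .sen _ => true
  | _ => false

/-- Whether a player is a representative. -/
def USPlayer.isRep : USPlayer → Bool
  | .rep _ => true
  | _ => false

/-- The number of senators in a coalition. -/
def numSen (S : Finset USPlayer) : ℕ := (S.filter (fun p => p.isSen)).card

/-- The number of representatives in a coalition. -/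
def numRep (S : Finset USPlayer) : ℕ := (S.filter (fun p => p.isRep)).card

/-- A coalition is winning in the US legislative game iff either the president is in it
together with at least 218 representatives and either at least 51 senators or the vice
president and at least 50 senators; or it contains at least 67 senators and at least
290 representatives (veto override). -/
def usWinning (S : Finset USPlayer) : Prop :=
  (USPlayer.pres ∈ S ∧ 218 ≤ numRep S ∧
    (51 ≤ numSen S ∨ (USPlayer.vp ∈ S ∧ 50 ≤ numSen S))) ∨
  (67 ≤ numSen S ∧ 290 ≤ numRep S)

/-- The number of coalitions of size `k` in which player `i` is critical in the US
legislative game. -/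
noncomputable def usCrit (i : USPlayer) (k : ℕ) : ℕ :=
  Set.ncard {S : Finset USPlayer |
    S.card = k ∧ i ∈ S ∧ usWinning S ∧ ¬ usWinning (S.erase i)}

-- helpers
deriving instance Fintype for USPlayer

open USPlayer Finset

lemma numSen_erase_vp (S : Finset USPlayer) : numSen (S.erase vp) = numSen S := by
  unfold numSen
  rw [Finset.filter_erase, Finset.erase_eq_of_notMem]
  rw [Finset.mem_filter]; simp [USPlayer.isSen]

lemma numRep_erase_vp (S : Finset USPlayer) : numRep (S.erase vp) = numRep S := by
  unfold numRep
  rw [Finset.filter_erase, Finset.erase_eq_of_notMem]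
  rw [Finset.mem_filter]; simp [USPlayer.isRep]

lemma numRep_erase_sen (S : Finset USPlayer) (s : Fin 100) :
    numRep (S.erase (sen s)) = numRep S := by
  unfold numRep
  rw [Finset.filter_erase, Finset.erase_eq_of_notMem]
  rw [Finset.mem_filter]; simp [USPlayer.isRep]

lemma numSen_erase_sen (S : Finset USPlayer) (s : Fin 100) (h : sen s ∈ S) :
    numSen (S.erase (sen s)) = numSen S - 1 := by
  unfold numSen
  rw [Finset.filter_erase, Finset.card_erase_of_mem]
  exact Finset.mem_filter.mpr ⟨h, rfl⟩

lemma numSen_pos_of_mem (S : Finset USPlayer) (s : Fin 100) (h : sen s ∈ S) :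
    1 ≤ numSen S := by
  unfold numSen
  refine Finset.card_pos.mpr ⟨sen s, ?_⟩
  exact Finset.mem_filter.mpr ⟨h, rfl⟩

lemma numSen_insert_vp (S : Finset USPlayer) : numSen (insert vp S) = numSen S := by
  unfold numSen
  rw [Finset.filter_insert]
  simp [USPlayer.isSen]

lemma numRep_insert_vp (S : Finset USPlayer) : numRep (insert vp S) = numRep S := by
  unfold numRep
  rw [Finset.filter_insert]
  simp [USPlayer.isRep]

lemma numRep_insert_sen (S : Finset USPlayer) (s : Fin 100) :
    numRep (insert (sen s) S) = numRep S := by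
  unfold numRep
  rw [Finset.filter_insert]
  simp [USPlayer.isRep]

lemma numSen_insert_sen (S : Finset USPlayer) (s : Fin 100) (h : sen s ∉ S) :
    numSen (insert (sen s) S) = numSen S + 1 := by
  unfold numSen
  rw [Finset.filter_insert]
  simp only [USPlayer.isSen, if_true]
  exact Finset.card_insert_of_notMem (fun hm => h (Finset.mem_filter.mp hm).1)

lemma numSen_le (S : Finset USPlayer) : numSen S ≤ 100 := by
  have : (S.filter (fun p => p.isSen)).card ≤ (Finset.univ : Finset (Fin 100)).card := by
    apply Finset.card_le_card_of_injOn (fun p => match p with | sen i => i | _ => 0)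
    · intro a _; exact Finset.mem_univ _
    · intro a ha b hb hab
      simp only [Finset.coe_filter, Set.mem_setOf_eq] at ha hb
      cases a <;> cases b <;> simp_all [USPlayer.isSen]
  rw [Finset.card_univ, Fintype.card_fin] at this
  exact this

lemma numRep_le (S : Finset USPlayer) : numRep S ≤ 435 := by
  have : (S.filter (fun p => p.isRep)).card ≤ (Finset.univ : Finset (Fin 435)).card := by
    apply Finset.card_le_card_of_injOn (fun p => match p with | rep i => i | _ => 0)
    · intro a _; exact Finset.mem_univ _
    · intro a ha b hb hab
      simp only [Finset.coe_filter, Set.mem_setOf_eq] at ha hb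
      cases a <;> cases b <;> simp_all [USPlayer.isRep]
  rw [Finset.card_univ, Fintype.card_fin] at this
  exact this

lemma card_decomp (S : Finset USPlayer) :
    S.card = (if pres ∈ S then 1 else 0) + (if vp ∈ S then 1 else 0)
      + numSen S + numRep S := by
  classical
  have h1 : S.card = ∑ x ∈ S, ((if x = pres then 1 else 0) + (if x = vp then 1 else 0)
      + (if x.isSen then 1 else 0) + (if x.isRep then 1 else 0)) := by
    rw [Finset.card_eq_sum_ones]
    apply Finset.sum_congr rfl
    intro x _
    cases x <;> simp [USPlayer.isSen, USPlayer.isRep]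
  have hp : (∑ x ∈ S, if x = pres then 1 else 0) = (if pres ∈ S then 1 else 0) := by
    simp [Finset.sum_ite_eq' S pres (fun _ => 1)]
  have hv : (∑ x ∈ S, if x = vp then 1 else 0) = (if vp ∈ S then 1 else 0) := by
    simp [Finset.sum_ite_eq' S vp (fun _ => 1)]
  have hs : (∑ x ∈ S, if x.isSen then 1 else 0) = numSen S := by
    rw [numSen, Finset.card_eq_sum_ones, Finset.sum_filter]
  have hr : (∑ x ∈ S, if x.isRep then 1 else 0) = numRep S := by
    rw [numRep, Finset.card_eq_sum_ones, Finset.sum_filter]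
  rw [h1, Finset.sum_add_distrib, Finset.sum_add_distrib, Finset.sum_add_distrib, hp, hv, hs, hr]

def Vset (k : ℕ) : Set (Finset USPlayer) :=
  {S | S.card = k ∧ pres ∈ S ∧ vp ∈ S ∧ numSen S = 50 ∧ 218 ≤ numRep S}

def Sset (s : Fin 100) (k : ℕ) : Set (Finset USPlayer) :=
  {S | S.card = k ∧ sen s ∈ S ∧
    ((pres ∈ S ∧ 218 ≤ numRep S ∧
        ((vp ∈ S ∧ numSen S = 50) ∨ (vp ∉ S ∧ numSen S = 51))) ∨
     (pres ∉ S ∧ numSen S = 67 ∧ 290 ≤ numRep S))}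

lemma crit_vp_eq (k : ℕ) :
    {S : Finset USPlayer | S.card = k ∧ vp ∈ S ∧ usWinning S ∧ ¬ usWinning (S.erase vp)}
      = Vset k := by
  ext S
  simp only [Set.mem_setOf_eq, Vset]
  constructor
  · rintro ⟨hc, hv, hw, hl⟩
    refine ⟨hc, ?_, hv, ?_, ?_⟩ <;>
    · rcases hw with ⟨hp, hr, hso⟩ | ⟨hs67, hr⟩
      · have hns : numSen S = 50 := by
          by_contra hne
          apply hl
          left
          refine ⟨Finset.mem_erase.mpr ⟨by simp, hp⟩, by rwa [numRep_erase_vp], ?_⟩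
          left
          rw [numSen_erase_vp]
          rcases hso with h | ⟨_, h⟩ <;> omega
        first
          | exact hp
          | exact hns
          | (rw [hns] at *; omega)
      · exfalso
        apply hl
        right
        rw [numSen_erase_vp, numRep_erase_vp]
        exact ⟨hs67, hr⟩
  · rintro ⟨hc, hp, hv, hs, hr⟩
    refine ⟨hc, hv, Or.inl ⟨hp, hr, Or.inr ⟨hv, by omega⟩⟩, ?_⟩
    rintro (⟨hp', hr', hso'⟩ | ⟨hs67', _⟩)
    · rw [numSen_erase_vp, hs] at hso'
      rcases hso' with h | ⟨h, _⟩
      · omega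
      · exact (Finset.notMem_erase vp S) h
    · rw [numSen_erase_vp, hs] at hs67'
      omega

lemma crit_sen_eq (s : Fin 100) (k : ℕ) :
    {S : Finset USPlayer | S.card = k ∧ sen s ∈ S ∧ usWinning S ∧ ¬ usWinning (S.erase (sen s))}
      = Sset s k := by
  ext S
  simp only [Set.mem_setOf_eq, Sset]
  constructor
  · rintro ⟨hc, hm, hw, hl⟩
    have h1 : 1 ≤ numSen S := numSen_pos_of_mem S s hm
    have hse : numSen (S.erase (sen s)) = numSen S - 1 := numSen_erase_sen S s hm
    have hre : numRep (S.erase (sen s)) = numRep S := numRep_erase_sen S s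
    refine ⟨hc, hm, ?_⟩
    rw [usWinning] at hl
    push_neg at hl
    rcases hw with ⟨hp, hr, hso⟩ | ⟨hs67, hr⟩
    · left
      refine ⟨hp, hr, ?_⟩
      have hp' : pres ∈ S.erase (sen s) := Finset.mem_erase.mpr ⟨by simp, hp⟩
      have hnot := hl.1 hp' (by rwa [hre])
      rw [hse] at hnot
      by_cases hv : vp ∈ S
      · left
        refine ⟨hv, ?_⟩
        have hv' : vp ∈ S.erase (sen s) := Finset.mem_erase.mpr ⟨by simp, hv⟩
        have := hnot.2 hv'
        rcases hso with h | ⟨_, h⟩ <;> omega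
      · right
        refine ⟨hv, ?_⟩
        rcases hso with h | ⟨hv', _⟩
        · have := hnot.1; omega
        · exact absurd hv' hv
    · right
      have hnotveto := hl.2
      rw [hse, hre] at hnotveto
      have hs67' : numSen S = 67 := by
        by_contra hne
        have := hnotveto (by omega)
        omega
      refine ⟨?_, hs67', hr⟩
      intro hp
      have hp' : pres ∈ S.erase (sen s) := Finset.mem_erase.mpr ⟨by simp, hp⟩
      have := hl.1 hp' (by rw [hre]; omega)
      rw [hse, hs67'] at this
      omega
  · rintro ⟨hc, hm, hcase⟩
    have hse : numSen (S.erase (sen s)) = numSen S - 1 := numSen_erase_sen S s hm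
    have hre : numRep (S.erase (sen s)) = numRep S := numRep_erase_sen S s
    refine ⟨hc, hm, ?_, ?_⟩
    · rcases hcase with ⟨hp, hr, hvs⟩ | ⟨hp, hs, hr⟩
      · left
        refine ⟨hp, hr, ?_⟩
        rcases hvs with ⟨hv, h50⟩ | ⟨_, h51⟩
        · right; exact ⟨hv, by omega⟩
        · left; omega
      · right; exact ⟨by omega, hr⟩
    · rintro (⟨hp', hr', hso'⟩ | ⟨hs67', hr'⟩)
      · rw [hse] at hso'
        have hpS : pres ∈ S := Finset.mem_of_mem_erase hp'
        rcases hcase with ⟨hp, hr, hvs⟩ | ⟨hp, _, _⟩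
        · rcases hvs with ⟨hv, h50⟩ | ⟨hv, h51⟩
          · rcases hso' with h | ⟨_, h⟩ <;> omega
          · rcases hso' with h | ⟨hv', _⟩
            · omega
            · exact hv (Finset.mem_of_mem_erase hv')
        · exact hp hpS
      · rw [hse] at hs67'
        rcases hcase with ⟨_, _, hvs⟩ | ⟨_, h67, _⟩
        · rcases hvs with ⟨_, h⟩ | ⟨_, h⟩ <;> omega
        · omega

/-- The map from vp-critical coalitions to senator-critical coalitions. -/
noncomputable def gmap (s : Fin 100) (T : Finset USPlayer) : Finset USPlayer :=
  if sen s ∈ T then T else insert (sen s) (T.erase vp)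

lemma gmap_mem (s : Fin 100) (k : ℕ) {T : Finset USPlayer} (hT : T ∈ Vset k) :
    gmap s T ∈ Sset s k := by
  obtain ⟨hc, hp, hv, hs, hr⟩ := hT
  unfold gmap
  by_cases hm : sen s ∈ T
  · rw [if_pos hm]
    exact ⟨hc, hm, Or.inl ⟨hp, hr, Or.inl ⟨hv, hs⟩⟩⟩
  · rw [if_neg hm]
    have hns : sen s ∉ T.erase vp := fun h => hm (Finset.mem_of_mem_erase h)
    have hvo : vp ∉ insert (sen s) (T.erase vp) := by
      simp [Finset.mem_insert, Finset.notMem_erase]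
    refine ⟨?_, Finset.mem_insert_self _ _, Or.inl ⟨?_, ?_, Or.inr ⟨hvo, ?_⟩⟩⟩
    · rw [Finset.card_insert_of_notMem hns, Finset.card_erase_of_mem hv]
      have : 1 ≤ T.card := Finset.card_pos.mpr ⟨vp, hv⟩
      omega
    · exact Finset.mem_insert.mpr (Or.inr (Finset.mem_erase.mpr ⟨by simp, hp⟩))
    · rw [numRep_insert_sen, numRep_erase_vp]; exact hr
    · rw [numSen_insert_sen _ _ hns, numSen_erase_vp]; omega

lemma gmap_inj (s : Fin 100) (k : ℕ) : Set.InjOn (gmap s) (Vset k) := by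
  intro T1 h1 T2 h2 heq
  unfold gmap at heq
  by_cases m1 : sen s ∈ T1 <;> by_cases m2 : sen s ∈ T2
  · rwa [if_pos m1, if_pos m2] at heq
  · rw [if_pos m1, if_neg m2] at heq
    exfalso
    have : vp ∈ insert (sen s) (T2.erase vp) := heq ▸ h1.2.2.1
    simp [Finset.notMem_erase] at this
  · rw [if_neg m1, if_pos m2] at heq
    exfalso
    have : vp ∈ insert (sen s) (T1.erase vp) := heq ▸ h2.2.2.1
    simp [Finset.notMem_erase] at this
  · rw [if_neg m1, if_neg m2] at heq
    have hns1 : sen s ∉ T1.erase vp := fun h => m1 (Finset.mem_of_mem_erase h)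
    have hns2 : sen s ∉ T2.erase vp := fun h => m2 (Finset.mem_of_mem_erase h)
    have he : T1.erase vp = T2.erase vp := by
      have := congrArg (fun X => X.erase (sen s)) heq
      simpa [Finset.erase_insert hns1, Finset.erase_insert hns2] using this
    have := congrArg (insert vp) he
    rwa [Finset.insert_erase h1.2.2.1, Finset.insert_erase h2.2.2.1] at this

lemma gmap_surj (s : Fin 100) (k : ℕ) (hk : k ≤ 356) :
    Sset s k ⊆ gmap s '' (Vset k) := by
  rintro S ⟨hc, hm, hcase⟩
  rcases hcase with ⟨hp, hr, hvs⟩ | ⟨_, hs67, hr290⟩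
  · rcases hvs with ⟨hv, h50⟩ | ⟨hv, h51⟩
    · exact ⟨S, ⟨hc, hp, hv, h50, hr⟩, by rw [gmap, if_pos hm]⟩
    · refine ⟨insert vp (S.erase (sen s)), ⟨?_, ?_, Finset.mem_insert_self _ _, ?_, ?_⟩, ?_⟩
      · have hvo : vp ∉ S.erase (sen s) := fun h => hv (Finset.mem_of_mem_erase h)
        rw [Finset.card_insert_of_notMem hvo, Finset.card_erase_of_mem hm]
        have : 1 ≤ S.card := Finset.card_pos.mpr ⟨sen s, hm⟩
        omega
      · exact Finset.mem_insert.mpr (Or.inr (Finset.mem_erase.mpr ⟨by simp, hp⟩))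
      · rw [numSen_insert_vp, numSen_erase_sen _ _ hm]; omega
      · rw [numRep_insert_vp, numRep_erase_sen]; exact hr
      · have hss : sen s ∉ insert vp (S.erase (sen s)) := by
          simp [Finset.mem_insert, Finset.notMem_erase]
        rw [gmap, if_neg hss]
        have hvo : vp ∉ S.erase (sen s) := fun h => hv (Finset.mem_of_mem_erase h)
        rw [Finset.erase_insert hvo, Finset.insert_erase hm]
  · exfalso
    have := card_decomp S
    rw [hc, hs67] at this
    omega

lemma gmap_pres (s : Fin 100) (k : ℕ) {T : Finset USPlayer} (hT : T ∈ Vset k) :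
    pres ∈ gmap s T := by
  unfold gmap
  by_cases hm : sen s ∈ T
  · rw [if_pos hm]; exact hT.2.1
  · rw [if_neg hm]
    exact Finset.mem_insert.mpr (Or.inr (Finset.mem_erase.mpr ⟨by simp, hT.2.1⟩))

lemma sen_injective : Function.Injective USPlayer.sen := by
  intro a b h; cases h; rfl

lemma rep_injective : Function.Injective USPlayer.rep := by
  intro a b h; cases h; rfl

lemma witness (s : Fin 100) (k : ℕ) (h1 : 357 ≤ k) (h2 : k ≤ 503) :
    ∃ S ∈ Sset s k, pres ∉ S := by
  classical
  -- senators: s together with 66 others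
  obtain ⟨A', hA'sub, hA'card⟩ :
      ∃ A' ⊆ (Finset.univ : Finset (Fin 100)).erase s, A'.card = 66 := by
    apply Finset.exists_subset_card_eq
    rw [Finset.card_erase_of_mem (Finset.mem_univ s), Finset.card_univ, Fintype.card_fin]
    omega
  have hsA' : s ∉ A' := fun h => (Finset.notMem_erase s _) (hA'sub h)
  set A : Finset (Fin 100) := insert s A' with hA
  have hAcard : A.card = 67 := by rw [hA, Finset.card_insert_of_notMem hsA', hA'card]
  -- representatives
  set b : ℕ := min (k - 67) 435 with hb
  obtain ⟨B, _, hBcard⟩ : ∃ B ⊆ (Finset.univ : Finset (Fin 435)), B.card = b := by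
    apply Finset.exists_subset_card_eq
    rw [Finset.card_univ, Fintype.card_fin]; omega
  set W : Finset USPlayer :=
    (if 502 < k then {vp} else ∅) ∪ A.image sen ∪ B.image rep with hW
  have hvpset : Finset.filter (fun p => p.isSen) (if 502 < k then ({vp} : Finset USPlayer) else ∅) = ∅ := by
    split <;> rfl
  have hvpsetR : Finset.filter (fun p => p.isRep) (if 502 < k then ({vp} : Finset USPlayer) else ∅) = ∅ := by
    split <;> rfl
  have hnumSen : numSen W = 67 := by
    rw [hW, numSen, Finset.filter_union, Finset.filter_union, hvpset,
      Finset.filter_image, Finset.filter_image]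
    simp only [USPlayer.isSen]
    simp [Finset.card_image_of_injective _ sen_injective, hAcard]
  have hnumRep : numRep W = b := by
    rw [hW, numRep, Finset.filter_union, Finset.filter_union, hvpsetR,
      Finset.filter_image, Finset.filter_image]
    simp only [USPlayer.isRep]
    simp [Finset.card_image_of_injective _ rep_injective, hBcard]
  have hpres : pres ∉ W := by
    rw [hW]
    simp only [Finset.mem_union, Finset.mem_image, not_or]
    refine ⟨⟨?_, ?_⟩, ?_⟩
    · split <;> simp
    · rintro ⟨x, _, h⟩; cases h
    · rintro ⟨x, _, h⟩; cases h
  have hvpW : vp ∈ W ↔ 502 < k := by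
    rw [hW]
    simp only [Finset.mem_union, Finset.mem_image]
    constructor
    · rintro ((h | ⟨x, _, h⟩) | ⟨x, _, h⟩)
      · revert h; split <;> simp_all
      · cases h
      · cases h
    · intro h; left; left; rw [if_pos h]; exact Finset.mem_singleton_self _
  have hcard : W.card = k := by
    have := card_decomp W
    rw [hnumSen, hnumRep, if_neg hpres] at this
    by_cases hk : 502 < k
    · rw [if_pos (hvpW.mpr hk)] at this; omega
    · rw [if_neg (fun h => hk (hvpW.mp h))] at this; omega
  have hsW : sen s ∈ W := by
    rw [hW]
    simp only [Finset.mem_union, Finset.mem_image]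
    exact Or.inl (Or.inr ⟨s, Finset.mem_insert_self _ _, rfl⟩)
  exact ⟨W, ⟨hcard, hsW, Or.inr ⟨hpres, hnumSen, by omega⟩⟩, hpres⟩


/-- Proposition 4 of the paper: comparing a senator and the vice president. If the
senator's critical number vanishes at `k` then so does the vice president's; if it is
nonzero then `270 ≤ k ≤ 503`, with equality of critical numbers for `270 ≤ k ≤ 356`
and strict dominance of the senator for `357 ≤ k ≤ 503`. -/
theorem us_senator_vs_vp (s : Fin 100) :
    (∀ k : ℕ, usCrit (USPlayer.sen s) k = 0 → usCrit USPlayer.vp k = 0) ∧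
    (∀ k : ℕ, usCrit (USPlayer.sen s) k ≠ 0 → 270 ≤ k ∧ k ≤ 503) ∧
    (∀ k : ℕ, 270 ≤ k → k ≤ 356 → usCrit (USPlayer.sen s) k = usCrit USPlayer.vp k) ∧
    (∀ k : ℕ, 357 ≤ k → k ≤ 503 → usCrit (USPlayer.sen s) k > usCrit USPlayer.vp k) := by
  have hvc : ∀ k, usCrit vp k = (Vset k).ncard := fun k => by rw [usCrit, crit_vp_eq]
  have hsc : ∀ k, usCrit (sen s) k = (Sset s k).ncard := fun k => by rw [usCrit, crit_sen_eq]
  refine ⟨?_, ?_, ?_, ?_⟩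
  · intro k h
    rw [hvc]
    by_contra hne
    obtain ⟨T, hT⟩ := Set.nonempty_of_ncard_ne_zero hne
    have hmem : gmap s T ∈ Sset s k := gmap_mem s k hT
    rw [hsc] at h
    have : 0 < (Sset s k).ncard :=
      (Set.ncard_pos (Set.toFinite _)).mpr ⟨gmap s T, hmem⟩
    omega
  · intro k h
    rw [hsc] at h
    obtain ⟨S, hc, hm, hcase⟩ := Set.nonempty_of_ncard_ne_zero h
    have hd := card_decomp S
    have hrl := numRep_le S
    have hr218 : 218 ≤ numRep S ∨ 290 ≤ numRep S := by
      rcases hcase with ⟨_, hr, _⟩ | ⟨_, _, hr⟩ <;> [exact Or.inl hr; exact Or.inr hr]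
    rcases hcase with ⟨hp, hr, hvs⟩ | ⟨hp, h67, hr⟩
    · rw [if_pos hp] at hd
      rcases hvs with ⟨hv, h50⟩ | ⟨hv, h51⟩
      · rw [if_pos hv] at hd; omega
      · rw [if_neg hv] at hd; omega
    · rw [if_neg hp] at hd
      have : (if vp ∈ S then 1 else 0) ≤ 1 := by split <;> omega
      omega
  · intro k _ hk2
    rw [hsc, hvc]
    have himg : gmap s '' Vset k = Sset s k := by
      apply Set.Subset.antisymm
      · rintro x ⟨T, hT, rfl⟩; exact gmap_mem s k hT
      · exact gmap_surj s k hk2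
    rw [← himg, Set.ncard_image_of_injOn (gmap_inj s k)]
  · intro k hk1 hk2
    rw [hsc, hvc, gt_iff_lt, ← Set.ncard_image_of_injOn (gmap_inj s k)]
    apply Set.ncard_lt_ncard _ (Set.toFinite _)
    constructor
    · rintro x ⟨T, hT, rfl⟩; exact gmap_mem s k hT
    · obtain ⟨W, hW, hpW⟩ := witness s k hk1 hk2
      intro hsub
      obtain ⟨T, hT, hTW⟩ := hsub hW
      exact hpW (hTW ▸ gmap_pres s k hT)
end
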